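/- Let Ω ⊂ ℝⁿ be a bounded domain and let φ ∈ Φ_w(Ω) satisfy (A0), (A1-n) and (aDec)_q for some q < ∞. Then there exists a constant C ≥ 1, depending only on n and the constants in (A0), (A1-n), (aDec)_q and (aInc)_1, such that for every ball B ⊂ ℝⁿ with |B| ≤ 1 and |B ∩ Ω| > 0 and every t ∈ [0, |B|^{-1/n}], one has φ_B^+(t) ≤ C·(φ_B^-(t) + 1), where φ_B^+(t) := ess sup_{x ∈ B∩Ω} φ(x,t) and φ_B^-(t) := ess inf_{x ∈ B∩Ω} φ(x,t). -/

import Mathlib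

open MeasureTheory Set Filter ENNReal NNReal Metric

noncomputable section

/-- `Ω` is a bounded domain (open, connected, bounded). -/
def BoundedDomain {n : ℕ} (Ω : Set (Fin n → ℝ)) : Prop :=
  IsOpen Ω ∧ IsConnected Ω ∧ Bornology.IsBounded Ω

/-- `φ : Ω × [0,∞) → [0,∞]` is a Φ-prefunction. -/
def PhiPrefun {n : ℕ} (Ω : Set (Fin n → ℝ)) (φ : (Fin n → ℝ) → ℝ≥0 → ℝ≥0∞) : Prop :=
  (∀ t : ℝ≥0, Measurable fun x => φ x t) ∧
  (∀ x ∈ Ω, Monotone (φ x)) ∧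
  (∀ x ∈ Ω, φ x 0 = 0) ∧
  (∀ x ∈ Ω, Tendsto (φ x) (nhdsWithin 0 (Ioi 0)) (nhds 0)) ∧
  (∀ x ∈ Ω, Tendsto (φ x) atTop (nhds ⊤))

/-- `(aInc)_p` with constant `L` for every `x ∈ Ω`:
`t ↦ φ(x,t)/t^p` is `L`-almost increasing on `(0,∞)`. -/
def PhiAInc {n : ℕ} (Ω : Set (Fin n → ℝ)) (φ : (Fin n → ℝ) → ℝ≥0 → ℝ≥0∞)
    (p : ℝ) (L : ℝ≥0) : Prop :=
  ∀ x ∈ Ω, ∀ s t : ℝ≥0, 0 < s → s ≤ t →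
    φ x s / (s : ℝ≥0∞) ^ p ≤ L * (φ x t / (t : ℝ≥0∞) ^ p)

/-- `φ` is a weak Φ-function on `Ω` with `(aInc)_1` constant `L`. -/
def IsWeakPhi {n : ℕ} (Ω : Set (Fin n → ℝ)) (φ : (Fin n → ℝ) → ℝ≥0 → ℝ≥0∞)
    (L : ℝ≥0) : Prop :=
  PhiPrefun Ω φ ∧ 1 ≤ L ∧ PhiAInc Ω φ 1 L ∧
  ∀ x ∈ Ω, ∀ t : ℝ≥0, Tendsto (φ x) (nhdsWithin t (Iio t)) (nhds (φ x t))

/-- `(A0)` with constant `β`: `φ(x,β) ≤ 1 ≤ φ(x,1/β)` for a.e. `x ∈ Ω`. -/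
def PhiA0 {n : ℕ} (Ω : Set (Fin n → ℝ)) (φ : (Fin n → ℝ) → ℝ≥0 → ℝ≥0∞)
    (β : ℝ≥0) : Prop :=
  ∀ᵐ x ∂(volume : Measure (Fin n → ℝ)), x ∈ Ω → φ x β ≤ 1 ∧ 1 ≤ φ x β⁻¹

/-- `(aDec)_q` with constant `L`: `t ↦ φ(x,t)/t^q` is `L`-almost decreasing
on `(0,∞)` for a.e. `x ∈ Ω`. -/
def PhiADec {n : ℕ} (Ω : Set (Fin n → ℝ)) (φ : (Fin n → ℝ) → ℝ≥0 → ℝ≥0∞)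
    (q : ℝ) (L : ℝ≥0) : Prop :=
  ∀ᵐ x ∂(volume : Measure (Fin n → ℝ)), x ∈ Ω → ∀ s t : ℝ≥0, 0 < s → s ≤ t →
    φ x t / (t : ℝ≥0∞) ^ q ≤ L * (φ x s / (s : ℝ≥0∞) ^ q)

/-- `(aDec)_q^∞` with constant `L`: `t ↦ (φ(x,t)+1)/t^q` is `L`-almost decreasing
on `(0,∞)` for a.e. `x ∈ Ω`. -/
def PhiADecInf {n : ℕ} (Ω : Set (Fin n → ℝ)) (φ : (Fin n → ℝ) → ℝ≥0 → ℝ≥0∞)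
    (q : ℝ) (L : ℝ≥0) : Prop :=
  ∀ᵐ x ∂(volume : Measure (Fin n → ℝ)), x ∈ Ω → ∀ s t : ℝ≥0, 0 < s → s ≤ t →
    (φ x t + 1) / (t : ℝ≥0∞) ^ q ≤ L * ((φ x s + 1) / (s : ℝ≥0∞) ^ q)

/-- The left-inverse `φ⁻¹(x,τ) = inf {t ≥ 0 : φ(x,t) ≥ τ}`. -/
def phiInv {n : ℕ} (φ : (Fin n → ℝ) → ℝ≥0 → ℝ≥0∞) (x : Fin n → ℝ) (τ : ℝ≥0∞) : ℝ≥0∞ :=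
  sInf ((fun t : ℝ≥0 => (t : ℝ≥0∞)) '' {t : ℝ≥0 | τ ≤ φ x t})

/-- `(A1)` with constant `β`: for every ball `B` and a.e. `x, y ∈ B ∩ Ω`,
`β φ⁻¹(x,τ) ≤ φ⁻¹(y,τ)` for all `τ ∈ [1, 1/|B|]`. -/
def PhiA1 {n : ℕ} (Ω : Set (Fin n → ℝ)) (φ : (Fin n → ℝ) → ℝ≥0 → ℝ≥0∞)
    (β : ℝ≥0) : Prop :=
  ∀ (z : Fin n → ℝ) (ρ : ℝ), 0 < ρ →
    ∀ᵐ x ∂(volume : Measure (Fin n → ℝ)), ∀ᵐ y ∂(volume : Measure (Fin n → ℝ)),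
      x ∈ Metric.ball z ρ ∩ Ω → y ∈ Metric.ball z ρ ∩ Ω →
      ∀ τ : ℝ≥0∞, 1 ≤ τ → τ ≤ (volume (Metric.ball z ρ))⁻¹ →
        (β : ℝ≥0∞) * phiInv φ x τ ≤ phiInv φ y τ

/-- `(A1-n)` with constant `β`: for every ball `B` and a.e. `x, y ∈ B ∩ Ω`,
`φ(x,βt) ≤ φ(y,t)` for all `t ∈ [1, |B|^{-1/n}]`. -/
def PhiA1n {n : ℕ} (Ω : Set (Fin n → ℝ)) (φ : (Fin n → ℝ) → ℝ≥0 → ℝ≥0∞)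
    (β : ℝ≥0) : Prop :=
  ∀ (z : Fin n → ℝ) (ρ : ℝ), 0 < ρ →
    ∀ᵐ x ∂(volume : Measure (Fin n → ℝ)), ∀ᵐ y ∂(volume : Measure (Fin n → ℝ)),
      x ∈ Metric.ball z ρ ∩ Ω → y ∈ Metric.ball z ρ ∩ Ω →
      ∀ t : ℝ≥0, 1 ≤ t → (t : ℝ≥0∞) ≤ (volume (Metric.ball z ρ)) ^ (-(1 / (n : ℝ))) →
        φ x (β * t) ≤ φ y t

/-- From an almost-monotonicity inequality in divided form, extract a
multiplicative bound. -/
lemma div_rpow_le_extract {r : ℝ} (hr : 0 ≤ r) (a b : ℝ≥0∞) (c S T : ℝ≥0)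
    (hS : 0 < S)
    (h : a / (S : ℝ≥0∞) ^ r ≤ c * (b / (T : ℝ≥0∞) ^ r)) :
    a ≤ (c : ℝ≥0∞) * ((S : ℝ≥0∞) ^ r / (T : ℝ≥0∞) ^ r) * b := by
  have hS0 : ((S : ℝ≥0∞)) ^ r ≠ 0 :=
    (ENNReal.rpow_pos (by exact_mod_cast hS) ENNReal.coe_ne_top).ne'
  have hStop : ((S : ℝ≥0∞)) ^ r ≠ ∞ :=
    ENNReal.rpow_ne_top_of_nonneg hr ENNReal.coe_ne_top
  calc a = a / (S : ℝ≥0∞) ^ r * (S : ℝ≥0∞) ^ r := (ENNReal.div_mul_cancel hS0 hStop).symm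
    _ ≤ (c : ℝ≥0∞) * (b / (T : ℝ≥0∞) ^ r) * (S : ℝ≥0∞) ^ r := mul_le_mul_left h _
    _ = (c : ℝ≥0∞) * ((S : ℝ≥0∞) ^ r / (T : ℝ≥0∞) ^ r) * b := by
        rw [div_eq_mul_inv, div_eq_mul_inv]; ring

/-- The pointwise core estimate. -/
lemma statement9_pointwise (q : ℝ) (hq : 1 ≤ q) (β₀ β₁ L L₁ : ℝ≥0)
    (hβ₀0 : 0 < β₀) (hβ₀1 : β₀ ≤ 1) (hβ₁0 : 0 < β₁) (hβ₁1 : β₁ < 1)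
    (f g : ℝ≥0 → ℝ≥0∞) (bound : ℝ≥0∞)
    (hf0 : f 0 = 0) (hfβ : f β₀ ≤ 1)
    (hinc : ∀ s t : ℝ≥0, 0 < s → s ≤ t →
      f s / (s : ℝ≥0∞) ^ (1 : ℝ) ≤ L * (f t / (t : ℝ≥0∞) ^ (1 : ℝ)))
    (hdec : ∀ s t : ℝ≥0, 0 < s → s ≤ t →
      f t / (t : ℝ≥0∞) ^ q ≤ L₁ * (f s / (s : ℝ≥0∞) ^ q))
    (hA1 : ∀ t : ℝ≥0, 1 ≤ t → (t : ℝ≥0∞) ≤ bound → f (β₁ * t) ≤ g t)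
    (t : ℝ≥0) (ht : (t : ℝ≥0∞) ≤ bound) :
    f t ≤ ((L : ℝ≥0∞) + (L₁ : ℝ≥0∞) * ((β₀ : ℝ≥0∞))⁻¹ ^ q
        + (L₁ : ℝ≥0∞) * ((β₁ : ℝ≥0∞))⁻¹ ^ q) * (g t + 1) := by
  have hq0 : (0 : ℝ) ≤ q := le_trans zero_le_one hq
  set K : ℝ≥0∞ := (L : ℝ≥0∞) + (L₁ : ℝ≥0∞) * ((β₀ : ℝ≥0∞))⁻¹ ^ q
        + (L₁ : ℝ≥0∞) * ((β₁ : ℝ≥0∞))⁻¹ ^ q with hK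
  have hg1 : (1 : ℝ≥0∞) ≤ g t + 1 := le_add_self
  rcases eq_or_lt_of_le (zero_le : (0 : ℝ≥0) ≤ t) with ht0 | ht0
  · rw [← ht0, hf0]; exact zero_le
  by_cases h1 : t ≤ 1
  · by_cases h2 : t ≤ β₀
    · -- use (aInc)_1
      have h := div_rpow_le_extract zero_le_one (f t) (f β₀) L t β₀ ht0
        (hinc t β₀ ht0 h2)
      have hratio : (t : ℝ≥0∞) ^ (1 : ℝ) / (β₀ : ℝ≥0∞) ^ (1 : ℝ) ≤ 1 := by
        rw [ENNReal.rpow_one, ENNReal.rpow_one]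
        exact ENNReal.div_le_of_le_mul (by simpa using (ENNReal.coe_le_coe.mpr h2))
      calc f t ≤ (L : ℝ≥0∞) * ((t : ℝ≥0∞) ^ (1 : ℝ) / (β₀ : ℝ≥0∞) ^ (1 : ℝ)) * f β₀ := h
        _ ≤ (L : ℝ≥0∞) * 1 * 1 := mul_le_mul' (mul_le_mul' le_rfl hratio) hfβ
        _ = (L : ℝ≥0∞) := by ring
        _ ≤ K := by rw [hK]; exact le_add_of_le_of_nonneg (le_add_of_le_of_nonneg le_rfl zero_le) zero_le
        _ ≤ K * (g t + 1) := le_mul_of_one_le_right zero_le hg1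
    · -- β₀ ≤ t ≤ 1 : use (aDec)_q down to β₀
      have h2' : β₀ ≤ t := le_of_not_ge h2
      have h := div_rpow_le_extract hq0 (f t) (f β₀) L₁ t β₀ ht0
        (hdec β₀ t hβ₀0 h2')
      have hratio : (t : ℝ≥0∞) ^ q / (β₀ : ℝ≥0∞) ^ q ≤ ((β₀ : ℝ≥0∞))⁻¹ ^ q := by
        rw [ENNReal.inv_rpow]
        have htq : (t : ℝ≥0∞) ^ q ≤ 1 :=
          ENNReal.rpow_le_one (by exact_mod_cast h1) hq0
        calc (t : ℝ≥0∞) ^ q / (β₀ : ℝ≥0∞) ^ q ≤ 1 / (β₀ : ℝ≥0∞) ^ q :=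
              ENNReal.div_le_div_right htq _
          _ = ((β₀ : ℝ≥0∞) ^ q)⁻¹ := one_div _
      calc f t ≤ (L₁ : ℝ≥0∞) * ((t : ℝ≥0∞) ^ q / (β₀ : ℝ≥0∞) ^ q) * f β₀ := h
        _ ≤ (L₁ : ℝ≥0∞) * ((β₀ : ℝ≥0∞))⁻¹ ^ q * 1 :=
            mul_le_mul' (mul_le_mul' le_rfl hratio) hfβ
        _ = (L₁ : ℝ≥0∞) * ((β₀ : ℝ≥0∞))⁻¹ ^ q := by ring
        _ ≤ K := by rw [hK]; exact le_add_of_le_of_nonneg (le_add_of_nonneg_of_le zero_le le_rfl) zero_le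
        _ ≤ K * (g t + 1) := le_mul_of_one_le_right zero_le hg1
  · -- 1 < t : use (A1-n) and (aDec)_q
    have h1' : (1 : ℝ≥0) ≤ t := le_of_lt (lt_of_not_ge h1)
    have hs0 : (0 : ℝ≥0) < β₁ * t := mul_pos hβ₁0 ht0
    have hst : β₁ * t ≤ t := by
      calc β₁ * t ≤ 1 * t := mul_le_mul_left hβ₁1.le t
        _ = t := one_mul t
    have h := div_rpow_le_extract hq0 (f t) (f (β₁ * t)) L₁ t (β₁ * t) ht0
      (hdec (β₁ * t) t hs0 hst)
    have htqne : ((t : ℝ≥0∞)) ^ q ≠ 0 :=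
      (ENNReal.rpow_pos (by exact_mod_cast ht0) ENNReal.coe_ne_top).ne'
    have htqtop : ((t : ℝ≥0∞)) ^ q ≠ ∞ :=
      ENNReal.rpow_ne_top_of_nonneg hq0 ENNReal.coe_ne_top
    have hβqne : ((β₁ : ℝ≥0∞)) ^ q ≠ 0 :=
      (ENNReal.rpow_pos (by exact_mod_cast hβ₁0) ENNReal.coe_ne_top).ne'
    have hβqtop : ((β₁ : ℝ≥0∞)) ^ q ≠ ∞ :=
      ENNReal.rpow_ne_top_of_nonneg hq0 ENNReal.coe_ne_top
    have hratio : (t : ℝ≥0∞) ^ q / ((β₁ * t : ℝ≥0) : ℝ≥0∞) ^ q = ((β₁ : ℝ≥0∞))⁻¹ ^ q := by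
      rw [ENNReal.coe_mul, ENNReal.mul_rpow_of_nonneg _ _ hq0, ENNReal.inv_rpow,
        div_eq_mul_inv, ENNReal.mul_inv (Or.inl hβqne) (Or.inl hβqtop)]
      rw [mul_comm ((β₁ : ℝ≥0∞) ^ q)⁻¹ _, ← mul_assoc,
        ENNReal.mul_inv_cancel htqne htqtop, one_mul]
    have hA := hA1 t h1' ht
    calc f t ≤ (L₁ : ℝ≥0∞) * ((t : ℝ≥0∞) ^ q / ((β₁ * t : ℝ≥0) : ℝ≥0∞) ^ q) * f (β₁ * t) := h
      _ = (L₁ : ℝ≥0∞) * ((β₁ : ℝ≥0∞))⁻¹ ^ q * f (β₁ * t) := by rw [hratio]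
      _ ≤ K * g t := by
          refine mul_le_mul' ?_ hA
          rw [hK]; exact le_add_of_nonneg_of_le zero_le le_rfl
      _ ≤ K * (g t + 1) := mul_le_mul' le_rfl le_self_add

/-- Let `Ω ⊂ ℝⁿ` be a bounded domain and `φ ∈ Φ_w(Ω)` satisfy
`(A0)`, `(A1-n)` and `(aDec)_q`. Then there is `C ≥ 1`, depending only on `n` and
the constants in `(A0)`, `(A1-n)`, `(aDec)_q` and `(aInc)_1`, such that for every
ball `B` with `|B| ≤ 1` and `|B ∩ Ω| > 0` and every `t ∈ [0, |B|^{-1/n}]`,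
one has `φ_B⁺(t) ≤ C (φ_B⁻(t) + 1)`. -/
theorem statement9 (n : ℕ) (q : ℝ) (β₀ β₁ L L₁ : ℝ≥0) (hq : 1 ≤ q)
    (hβ₀0 : 0 < β₀) (hβ₀1 : β₀ ≤ 1) (hβ₁0 : 0 < β₁) (hβ₁1 : β₁ < 1)
    (hL : 1 ≤ L) (hL₁ : 1 ≤ L₁) :
    ∃ C : ℝ≥0, 1 ≤ C ∧
      ∀ (Ω : Set (Fin n → ℝ)) (φ : (Fin n → ℝ) → ℝ≥0 → ℝ≥0∞),
        BoundedDomain Ω → IsWeakPhi Ω φ L → PhiA0 Ω φ β₀ → PhiA1n Ω φ β₁ →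
        PhiADec Ω φ q L₁ →
        ∀ (z : Fin n → ℝ) (ρ : ℝ), 0 < ρ →
          volume (Metric.ball z ρ) ≤ 1 → 0 < volume (Metric.ball z ρ ∩ Ω) →
          ∀ t : ℝ≥0,
            (t : ℝ≥0∞) ≤ (volume (Metric.ball z ρ)) ^ (-(1 / (n : ℝ))) →
            essSup (fun x => φ x t) (volume.restrict (Metric.ball z ρ ∩ Ω)) ≤
              (C : ℝ≥0∞) *
                (essInf (fun x => φ x t) (volume.restrict (Metric.ball z ρ ∩ Ω)) + 1) := by
  classical
  have hq0 : (0 : ℝ) ≤ q := le_trans zero_le_one hq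
  set C : ℝ≥0 := L + L₁ * β₀⁻¹ ^ q + L₁ * β₁⁻¹ ^ q with hCdef
  have hC1 : (1 : ℝ≥0) ≤ C := by
    rw [hCdef]
    calc (1 : ℝ≥0) ≤ L := hL
      _ ≤ _ := le_add_of_le_of_nonneg (le_add_of_le_of_nonneg le_rfl zero_le) zero_le
  refine ⟨C, hC1, ?_⟩
  intro Ω φ hdom hweak hA0 hA1n hADec z ρ hρ hvol hpos t htle
  have hCcoe : ((C : ℝ≥0) : ℝ≥0∞) = (L : ℝ≥0∞) + (L₁ : ℝ≥0∞) * ((β₀ : ℝ≥0∞))⁻¹ ^ q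
      + (L₁ : ℝ≥0∞) * ((β₁ : ℝ≥0∞))⁻¹ ^ q := by
    rw [hCdef]
    push_cast
    rw [ENNReal.coe_rpow_of_nonneg _ hq0, ENNReal.coe_rpow_of_nonneg _ hq0,
      ENNReal.coe_inv hβ₀0.ne', ENNReal.coe_inv hβ₁0.ne']
  have hC0 : ((C : ℝ≥0) : ℝ≥0∞) ≠ 0 := by
    simp only [ne_eq, ENNReal.coe_eq_zero]
    exact (lt_of_lt_of_le one_pos hC1).ne'
  set S : Set (Fin n → ℝ) := Metric.ball z ρ ∩ Ω with hSdef
  have hSmeas : MeasurableSet S := (Metric.isOpen_ball.inter hdom.1).measurableSet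
  set ν := (volume : Measure (Fin n → ℝ)).restrict S with hνdef
  -- the pairwise a.e. estimate
  have Hxy : ∀ᵐ x ∂ν, ∀ᵐ y ∂ν, φ x t ≤ (C : ℝ≥0∞) * (φ y t + 1) := by
    have hA1' := hA1n z ρ hρ
    filter_upwards [MeasureTheory.ae_restrict_mem hSmeas,
      MeasureTheory.ae_restrict_of_ae hA0,
      MeasureTheory.ae_restrict_of_ae hADec,
      MeasureTheory.ae_restrict_of_ae hA1'] with x hxS hxA0 hxDec hxA1
    have hxΩ : x ∈ Ω := hxS.2
    filter_upwards [MeasureTheory.ae_restrict_mem hSmeas,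
      MeasureTheory.ae_restrict_of_ae hxA1] with y hyS hy
    rw [hCcoe]
    refine statement9_pointwise q hq β₀ β₁ L L₁ hβ₀0 hβ₀1 hβ₁0 hβ₁1
      (φ x) (φ y) ((volume (Metric.ball z ρ)) ^ (-(1 / (n : ℝ))))
      ?_ ?_ ?_ ?_ ?_ t htle
    · exact hweak.1.2.2.1 x hxΩ
    · exact (hxA0 hxΩ).1
    · intro s u hs hsu
      exact hweak.2.2.1 x hxΩ s u hs hsu
    · intro s u hs hsu
      exact hxDec hxΩ s u hs hsu
    · intro u hu hub
      exact hy hxS hyS u hu hub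
  -- conclude
  set I := essInf (fun x => φ x t) ν with hIdef
  have key : ∀ᵐ x ∂ν, φ x t ≤ (C : ℝ≥0∞) * (I + 1) := by
    filter_upwards [Hxy] with x hx
    have h1 : ∀ᵐ y ∂ν, φ x t / (C : ℝ≥0∞) - 1 ≤ φ y t := by
      filter_upwards [hx] with y hy
      have hdiv : φ x t / (C : ℝ≥0∞) ≤ φ y t + 1 :=
        ENNReal.div_le_of_le_mul' hy
      exact tsub_le_iff_right.mpr hdiv
    have h2 : φ x t / (C : ℝ≥0∞) - 1 ≤ I :=
      le_essInf_of_ae_le _ h1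
    have h3 : φ x t / (C : ℝ≥0∞) ≤ I + 1 :=
      le_trans le_tsub_add (add_le_add_left h2 1)
    have h4 := (ENNReal.div_le_iff_le_mul (Or.inl hC0) (Or.inl ENNReal.coe_ne_top)).mp h3
    calc φ x t ≤ (I + 1) * (C : ℝ≥0∞) := h4
      _ = (C : ℝ≥0∞) * (I + 1) := mul_comm _ _
  exact essSup_le_of_ae_le _ key
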